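/- Let B_r ⊂ ℝⁿ be an open ball with radius r ≤ 1, let p > 1, k ≥ 1, and f ∈ L^p(B_r, ℝ^k). Let α ∈ (0,1], S ≥ 1, K ≥ 1, and let B_ϱ be the concentric ball of radius ϱ < r. Assume that (∫_{B_ϱ} |f(x+h) − f(x)|^p dx)^{1/p} ≤ S |h|^α for every h ∈ ℝⁿ with 0 < |h| ≤ (r − ϱ)/K. Then for every β ∈ (0, α) one has ‖f‖_{L^p(B_ϱ)} + [f]_{β,p;B_ϱ} ≤ (c/(α − β)^{1/p}) ((r − ϱ)/K)^{α − β} S + c (K/(r − ϱ))^{n/p + β} ‖f‖_{L^p(B_r)}, where c is a constant depending only on n and p. -/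

import Mathlib

open MeasureTheory
open scoped ENNReal

/-- The Gagliardo seminorm `[g]_{σ,p;U}` of a map `g : U ⊆ ℝⁿ → F`. -/
noncomputable def gagliardoSeminorm {n : ℕ} {F : Type*} [NormedAddCommGroup F]
    (U : Set (EuclideanSpace ℝ (Fin n))) (g : EuclideanSpace ℝ (Fin n) → F) (σ p : ℝ) : ℝ≥0∞ :=
  (∫⁻ x in U, ∫⁻ y in U,
      (‖g x - g y‖₊ : ℝ≥0∞) ^ p / edist x y ^ ((n : ℝ) + σ * p)) ^ (1 / p)

/-- The `L^p(U)` norm of a map `g : U ⊆ ℝⁿ → F`. -/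
noncomputable def lpNormOn {n : ℕ} {F : Type*} [NormedAddCommGroup F]
    (U : Set (EuclideanSpace ℝ (Fin n))) (g : EuclideanSpace ℝ (Fin n) → F) (p : ℝ) : ℝ≥0∞ :=
  (∫⁻ x in U, (‖g x‖₊ : ℝ≥0∞) ^ p) ^ (1 / p)

section NikAux

set_option linter.unusedVariables false
set_option linter.deprecated false

private lemma nik_geom (p s : ℝ) (hp : 0 < p) (hs : 0 < s) (hsp : s ≤ p) :
    (1 - ENNReal.ofReal ((2:ℝ) ^ (-s)))⁻¹ ≤
      ENNReal.ofReal ((1 + p * Real.log 2) / (Real.log 2 * s)) := by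
  have hlog2 : (0:ℝ) < Real.log 2 := Real.log_pos one_lt_two
  set t := Real.log 2 * s with ht
  have ht0 : 0 < t := by positivity
  have htP : t ≤ p * Real.log 2 := by rw [ht]; nlinarith
  have h2s : (2:ℝ) ^ (-s) = Real.exp (-t) := by
    rw [Real.rpow_def_of_pos two_pos]; ring_nf; rw [ht]
  have hexp : Real.exp (-t) ≤ (1+t)⁻¹ := by
    rw [Real.exp_neg]
    apply inv_anti₀ (by linarith)
    linarith [Real.add_one_le_exp t]
  have hkey : (2:ℝ)^(-s) + t/(1+p*Real.log 2) ≤ 1 := by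
    have h1 : (1+t)⁻¹ = 1 - t/(1+t) := by field_simp; ring
    have h2 : t/(1+p*Real.log 2) ≤ t/(1+t) := by gcongr <;> linarith
    rw [h2s]; rw [h1] at hexp; linarith
  have hofr : ENNReal.ofReal (t/(1+p*Real.log 2)) ≤ 1 - ENNReal.ofReal ((2:ℝ)^(-s)) := by
    apply ENNReal.le_sub_of_add_le_left ENNReal.ofReal_ne_top
    rw [← ENNReal.ofReal_add (by positivity) (by positivity), ← ENNReal.ofReal_one]
    exact ENNReal.ofReal_le_ofReal hkey
  calc (1 - ENNReal.ofReal ((2:ℝ)^(-s)))⁻¹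
      ≤ (ENNReal.ofReal (t/(1+p*Real.log 2)))⁻¹ := ENNReal.inv_le_inv' hofr
    _ = ENNReal.ofReal ((t/(1+p*Real.log 2))⁻¹) :=
        (ENNReal.ofReal_inv_of_pos (by positivity)).symm
    _ = ENNReal.ofReal ((1 + p * Real.log 2) / (Real.log 2 * s)) := by
        rw [inv_div, ht]

private lemma nik_add_rpow (a b : ℝ≥0∞) (p : ℝ) (hp : 0 ≤ p) :
    (a + b) ^ p ≤ ENNReal.ofReal (2 ^ p) * (a ^ p + b ^ p) := by
  have h2 : ENNReal.ofReal ((2:ℝ) ^ p) = (2:ℝ≥0∞) ^ p := by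
    rw [← ENNReal.ofReal_rpow_of_nonneg (by norm_num) hp, ENNReal.ofReal_ofNat]
  rw [h2]
  have hab : a + b ≤ 2 * (a ⊔ b) := by
    rw [two_mul]; exact add_le_add le_sup_left le_sup_right
  calc (a+b)^p ≤ (2 * (a ⊔ b))^p := ENNReal.rpow_le_rpow hab hp
    _ = 2^p * (a ⊔ b)^p := ENNReal.mul_rpow_of_nonneg _ _ hp
    _ ≤ 2^p * (a^p + b^p) := by
        gcongr
        rcases le_total a b with h|h
        · rw [sup_eq_right.mpr h]; exact le_add_self
        · rw [sup_eq_left.mpr h]; exact self_le_add_right _ _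

private lemma nik_annulus (n : ℕ) (p α β δ S V : ℝ) (hp : 1 < p) (hα0 : 0 < α) (hα1 : α ≤ 1)
    (hβ0 : 0 < β) (hβα : β < α) (hδ : 0 < δ) (hS : 0 < S) (hV : 0 < V) (j : ℕ) :
    (S * (δ * 2^(-(j:ℝ)))^α)^p / (δ * 2^(-(j:ℝ)-1))^((n:ℝ)+β*p) * ((δ*2^(-(j:ℝ)))^(n:ℝ) * V)
      ≤ (V * 2^((n:ℝ)+p) * S^p * δ^((α-β)*p)) * ((2:ℝ)^(-((α-β)*p)))^j := by
  have hp0 : (0:ℝ) < p := by linarith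
  set w : ℝ := (2:ℝ)^(-(j:ℝ)) with hw
  have hw0 : 0 < w := Real.rpow_pos_of_pos two_pos _
  set u : ℝ := δ * w with hu
  have hu0 : 0 < u := by positivity
  set Q : ℝ := (n:ℝ) + β * p with hQ
  have hQ0 : 0 < Q := by positivity
  have hhalf : δ * 2^(-(j:ℝ)-1) = u / 2 := by
    rw [hu, hw, show -(j:ℝ)-1 = -(j:ℝ) - 1 from rfl, Real.rpow_sub two_pos, Real.rpow_one]
    ring
  have h1 : (S * u ^ α) ^ p = S ^ p * u ^ (α * p) := by
    rw [Real.mul_rpow hS.le (Real.rpow_nonneg hu0.le _), ← Real.rpow_mul hu0.le]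
  have h2 : (u / 2) ^ Q = u ^ Q / 2 ^ Q := Real.div_rpow hu0.le (by norm_num) _
  have hkeyu : u ^ (α*p) * u ^ (n:ℝ) / u ^ Q = u ^ ((α-β)*p) := by
    rw [← Real.rpow_add hu0, ← Real.rpow_sub hu0]
    congr 1; rw [hQ]; ring
  have e1 : (S * u^α)^p / (u/2)^Q * (u^(n:ℝ) * V) = V * 2^Q * S^p * u^((α-β)*p) := by
    rw [h1, h2, ← hkeyu]; field_simp
  rw [hhalf, e1]
  have hws : u ^ ((α-β)*p) = δ^((α-β)*p) * ((2:ℝ)^(-((α-β)*p)))^j := by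
    rw [hu, Real.mul_rpow hδ.le hw0.le, hw, ← Real.rpow_natCast ((2:ℝ)^(-((α-β)*p))) j,
      ← Real.rpow_mul (by norm_num), ← Real.rpow_mul (by norm_num)]
    ring_nf
  rw [hws]
  have h2Q : (2:ℝ)^Q ≤ 2^((n:ℝ)+p) := by
    apply Real.rpow_le_rpow_of_exponent_le one_le_two
    rw [hQ]; nlinarith
  calc V * 2^Q * S^p * (δ^((α-β)*p) * ((2:ℝ)^(-((α-β)*p)))^j)
      ≤ V * 2^((n:ℝ)+p) * S^p * (δ^((α-β)*p) * ((2:ℝ)^(-((α-β)*p)))^j) := by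
        gcongr
    _ = (V * 2^((n:ℝ)+p) * S^p * δ^((α-β)*p)) * ((2:ℝ)^(-((α-β)*p)))^j := by ring

variable {n k : ℕ} {p q δ α β S V : ℝ}
  {f : EuclideanSpace ℝ (Fin n) → EuclideanSpace ℝ (Fin k)}
  {B B' : Set (EuclideanSpace ℝ (Fin n))}

private lemma nik_ball_measure (x₀ : EuclideanSpace ℝ (Fin n)) (ϱ r : ℝ)
    (hϱr : ϱ < r) (hr1 : r ≤ 1) :
    volume (Metric.ball x₀ ϱ) ≤
      ENNReal.ofReal ((volume (Metric.ball (0 : EuclideanSpace ℝ (Fin n)) 1)).toReal + 1) := by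
  calc volume (Metric.ball x₀ ϱ) ≤ volume (Metric.ball x₀ 1) :=
        measure_mono (Metric.ball_subset_ball (by linarith))
    _ = volume (Metric.ball (0 : EuclideanSpace ℝ (Fin n)) 1) :=
        Measure.addHaar_ball_center volume x₀ 1
    _ ≤ ENNReal.ofReal ((volume (Metric.ball (0 : EuclideanSpace ℝ (Fin n)) 1)).toReal + 1) := by
        have hlt : volume (Metric.ball (0 : EuclideanSpace ℝ (Fin n)) 1) < ⊤ :=
          measure_ball_lt_top
        have h := (ENNReal.ofReal_toReal hlt.ne).symm
        exact h.le.trans (ENNReal.ofReal_le_ofReal (by linarith))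

private lemma nik_key (hp : 1 < p) (hα0 : 0 < α) (hS0 : 0 < S)
    (hyp : ∀ h : EuclideanSpace ℝ (Fin n), 0 < ‖h‖ → ‖h‖ ≤ δ →
          (∫⁻ x in B, (‖f (x + h) - f x‖₊ : ℝ≥0∞) ^ p) ^ (1 / p) ≤
            ENNReal.ofReal (S * ‖h‖ ^ α)) :
    ∀ h : EuclideanSpace ℝ (Fin n), ‖h‖ ≤ δ →
      (∫⁻ x in B, (‖f (x + h) - f x‖₊ : ℝ≥0∞) ^ p) ≤ ENNReal.ofReal ((S * ‖h‖ ^ α) ^ p) := by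
  have hp0 : (0:ℝ) < p := by linarith
  intro h hh
  rcases eq_or_ne h 0 with rfl | hh0
  · have hz : ∀ x : EuclideanSpace ℝ (Fin n), (‖f (x + 0) - f x‖₊ : ℝ≥0∞) ^ p = 0 := by
      intro x
      rw [add_zero, sub_self, nnnorm_zero, ENNReal.coe_zero, ENNReal.zero_rpow_of_pos hp0]
    calc (∫⁻ x in B, (‖f (x + 0) - f x‖₊ : ℝ≥0∞) ^ p) = ∫⁻ _x in B, (0:ℝ≥0∞) :=
          lintegral_congr fun x => hz x
      _ = 0 := lintegral_zero
      _ ≤ _ := zero_le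
  · have hpos : 0 < ‖h‖ := norm_pos_iff.mpr hh0
    have h1 := hyp h hpos hh
    have h2 := ENNReal.rpow_le_rpow h1 hp0.le
    rw [← ENNReal.rpow_mul, one_div, inv_mul_cancel₀ hp0.ne', ENNReal.rpow_one] at h2
    rwa [ENNReal.ofReal_rpow_of_nonneg (by positivity) hp0.le] at h2

private lemma nik_meas_G (hf : Measurable f) :
    Measurable (fun z : EuclideanSpace ℝ (Fin n) × EuclideanSpace ℝ (Fin n) =>
      (‖f z.1 - f z.2‖₊ : ℝ≥0∞) ^ p / edist z.1 z.2 ^ q) :=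
  ((((hf.comp measurable_fst).sub
      (hf.comp measurable_snd)).nnnorm.coe_nnreal_ennreal).pow_const p).div
    (measurable_edist.pow_const q)

private lemma nik_split (hq0 : 0 < q) (hδ0 : 0 < δ)
    (G Gn Gf : EuclideanSpace ℝ (Fin n) → EuclideanSpace ℝ (Fin n) → ℝ≥0∞)
    (hGdef : G = fun x y => (‖f x - f y‖₊ : ℝ≥0∞) ^ p / edist x y ^ q)
    (hGndef : Gn = fun x y => if edist x y ≤ ENNReal.ofReal δ then G x y else 0)
    (hGfdef : Gf = fun x y => (‖f x - f y‖₊ : ℝ≥0∞) ^ p / (ENNReal.ofReal δ) ^ q)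
    (hGnmeas : Measurable (fun z : EuclideanSpace ℝ (Fin n) × EuclideanSpace ℝ (Fin n) =>
      Gn z.1 z.2)) :
    (∫⁻ x in B, ∫⁻ y in B, G x y) ≤
      (∫⁻ x in B, ∫⁻ y in B, Gn x y) + ∫⁻ x in B, ∫⁻ y in B, Gf x y := by
  have hpt : ∀ x y, G x y ≤ Gn x y + Gf x y := by
    intro x y
    by_cases hxy : edist x y ≤ ENNReal.ofReal δ
    · rw [hGndef]; simp only [hxy, if_true]; exact le_self_add
    · rw [hGndef]; simp only [hxy, if_false, zero_add, hGdef, hGfdef]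
      exact ENNReal.div_le_div le_rfl (ENNReal.rpow_le_rpow (le_of_lt (not_le.mp hxy)) hq0.le)
  calc (∫⁻ x in B, ∫⁻ y in B, G x y) ≤ ∫⁻ x in B, ∫⁻ y in B, (Gn x y + Gf x y) :=
      lintegral_mono fun x => lintegral_mono fun y => hpt x y
    _ = ∫⁻ x in B, ((∫⁻ y in B, Gn x y) + ∫⁻ y in B, Gf x y) := by
      refine lintegral_congr fun x => lintegral_add_left ?_ _
      exact hGnmeas.comp measurable_prodMk_left
    _ = (∫⁻ x in B, ∫⁻ y in B, Gn x y) + ∫⁻ x in B, ∫⁻ y in B, Gf x y := by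
      refine lintegral_add_left ?_ _
      exact hGnmeas.lintegral_prod_right'

private lemma nik_far (hp : 1 < p) (hq0 : 0 < q) (hδ0 : 0 < δ) (hf : Measurable f)
    (hBB' : B ⊆ B') (hBmeas : MeasurableSet B)
    (hV0 : 0 < V) (hμB : volume B ≤ ENNReal.ofReal V)
    (Gf : EuclideanSpace ℝ (Fin n) → EuclideanSpace ℝ (Fin n) → ℝ≥0∞)
    (hGfdef : Gf = fun x y => (‖f x - f y‖₊ : ℝ≥0∞) ^ p / (ENNReal.ofReal δ) ^ q) :
    (∫⁻ x in B, ∫⁻ y in B, Gf x y) ≤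
      ENNReal.ofReal (2 ^ (p+1) * V * δ ^ (-q)) * ∫⁻ x in B', (‖f x‖₊ : ℝ≥0∞) ^ p := by
  have hp0 : (0:ℝ) < p := by linarith
  set A : ℝ≥0∞ := ∫⁻ x in B', (‖f x‖₊ : ℝ≥0∞) ^ p with hA
  set AB : ℝ≥0∞ := ∫⁻ x in B, (‖f x‖₊ : ℝ≥0∞) ^ p with hAB
  have hABA : AB ≤ A := lintegral_mono_set hBB'
  set D : ℝ≥0∞ := (ENNReal.ofReal δ) ^ q with hD
  have hD0 : D ≠ 0 := by
    rw [hD]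
    exact (ENNReal.rpow_pos (by simp [hδ0]) ENNReal.ofReal_ne_top).ne'
  have hDinv : D⁻¹ ≠ ⊤ := by simp [hD0]
  have hmf : Measurable fun x => (‖f x‖₊ : ℝ≥0∞) ^ p :=
    (hf.nnnorm.coe_nnreal_ennreal).pow_const p
  have hμBlt : volume B ≠ ⊤ := (lt_of_le_of_lt hμB ENNReal.ofReal_lt_top).ne
  have step1 : (∫⁻ x in B, ∫⁻ y in B, Gf x y) ≤
      ENNReal.ofReal (2 ^ p) * (2 * (volume B * A)) * D⁻¹ := by
    have inner : ∀ x, (∫⁻ y in B, Gf x y) =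
        (∫⁻ y in B, (‖f x - f y‖₊ : ℝ≥0∞) ^ p) * D⁻¹ := by
      intro x
      rw [hGfdef]
      simp only [div_eq_mul_inv]
      exact lintegral_mul_const' _ _ hDinv
    calc (∫⁻ x in B, ∫⁻ y in B, Gf x y)
        = (∫⁻ x in B, (∫⁻ y in B, (‖f x - f y‖₊ : ℝ≥0∞) ^ p)) * D⁻¹ := by
          rw [← lintegral_mul_const' _ _ hDinv]
          exact lintegral_congr inner
      _ ≤ (∫⁻ x in B, (ENNReal.ofReal (2^p) * ((‖f x‖₊ : ℝ≥0∞)^p * volume B + AB))) * D⁻¹ := by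
          gcongr with x
          calc (∫⁻ y in B, (‖f x - f y‖₊ : ℝ≥0∞) ^ p)
              ≤ ∫⁻ y in B, ENNReal.ofReal (2^p) *
                  ((‖f x‖₊ : ℝ≥0∞)^p + (‖f y‖₊ : ℝ≥0∞)^p) := by
                refine lintegral_mono fun y => ?_
                refine le_trans ?_ (nik_add_rpow _ _ p hp0.le)
                refine ENNReal.rpow_le_rpow ?_ hp0.le
                rw [← ENNReal.coe_add]
                exact_mod_cast nnnorm_sub_le _ _
            _ = ENNReal.ofReal (2^p) * ((‖f x‖₊ : ℝ≥0∞)^p * volume B + AB) := by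
                rw [lintegral_const_mul' _ _ ENNReal.ofReal_ne_top]
                congr 1
                rw [lintegral_add_left (measurable_const) _]
                congr 1
                · exact setLIntegral_const B _
      _ = ENNReal.ofReal (2 ^ p) * (AB * volume B + AB * volume B) * D⁻¹ := by
          congr 1
          rw [lintegral_const_mul' _ _ ENNReal.ofReal_ne_top]
          congr 1
          rw [lintegral_add_right _ measurable_const, lintegral_mul_const' _ _ hμBlt,
            setLIntegral_const B _]
      _ = ENNReal.ofReal (2 ^ p) * (2 * (volume B * AB)) * D⁻¹ := by ring
      _ ≤ ENNReal.ofReal (2 ^ p) * (2 * (volume B * A)) * D⁻¹ := by gcongr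
  have hDinv' : D⁻¹ = ENNReal.ofReal (δ ^ (-q)) := by
    rw [hD, ENNReal.ofReal_rpow_of_nonneg hδ0.le hq0.le,
      ← ENNReal.ofReal_inv_of_pos (Real.rpow_pos_of_pos hδ0 q), ← Real.rpow_neg hδ0.le]
  refine step1.trans ?_
  rw [hDinv']
  calc ENNReal.ofReal (2^p) * (2 * (volume B * A)) * ENNReal.ofReal (δ^(-q))
      ≤ ENNReal.ofReal (2^p) * (2 * (ENNReal.ofReal V * A)) * ENNReal.ofReal (δ^(-q)) := by
        gcongr
    _ = (ENNReal.ofReal (2^p) * 2 * ENNReal.ofReal V * ENNReal.ofReal (δ^(-q))) * A := by ring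
    _ = ENNReal.ofReal (2^p * 2 * V * δ^(-q)) * A := by
        rw [ENNReal.ofReal_mul (by positivity), ENNReal.ofReal_mul (by positivity),
          ENNReal.ofReal_mul (by positivity)]
        norm_num
    _ = ENNReal.ofReal (2^(p+1) * V * δ^(-q)) * A := by
        congr 2
        rw [Real.rpow_add_one (by norm_num : (2:ℝ) ≠ 0) p]

private lemma nik_far_rpow (hp : 1 < p) (hq : q = (n:ℝ) + β * p) (hδ0 : 0 < δ)
    (Fa A : ℝ≥0∞) (hV0 : 0 < V)
    (hFar : Fa ≤ ENNReal.ofReal (2 ^ (p+1) * V * δ ^ (-q)) * A) :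
    Fa ^ (1/p) ≤ ENNReal.ofReal ((2 ^ (p+1) * V) ^ (1/p) * δ ^ (-((n:ℝ)/p + β))) * A ^ (1/p) := by
  have hp0 : (0:ℝ) < p := by linarith
  have h2p : (0:ℝ) < 2 ^ (p+1) := Real.rpow_pos_of_pos two_pos _
  calc Fa ^ (1/p) ≤ (ENNReal.ofReal (2 ^ (p+1) * V * δ ^ (-q)) * A) ^ (1/p) :=
        ENNReal.rpow_le_rpow hFar (by positivity)
    _ = ENNReal.ofReal (2 ^ (p+1) * V * δ ^ (-q)) ^ (1/p) * A ^ (1/p) :=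
        ENNReal.mul_rpow_of_nonneg _ _ (by positivity)
    _ = ENNReal.ofReal ((2 ^ (p+1) * V * δ ^ (-q)) ^ (1/p)) * A ^ (1/p) := by
        rw [ENNReal.ofReal_rpow_of_nonneg (by positivity) (by positivity)]
    _ = ENNReal.ofReal ((2 ^ (p+1) * V) ^ (1/p) * δ ^ (-((n:ℝ)/p + β))) * A ^ (1/p) := by
        congr 2
        rw [Real.mul_rpow (by positivity) (by positivity), ← Real.rpow_mul hδ0.le]
        congr 1
        congr 1
        rw [hq]
        field_simp

private lemma nik_swap (hBmeas : MeasurableSet B)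
    (Gn : EuclideanSpace ℝ (Fin n) → EuclideanSpace ℝ (Fin n) → ℝ≥0∞)
    (hGnmeas : Measurable (fun z : EuclideanSpace ℝ (Fin n) × EuclideanSpace ℝ (Fin n) =>
      Gn z.1 z.2)) :
    (∫⁻ x in B, ∫⁻ y in B, Gn x y) =
      ∫⁻ h, ∫⁻ x in B, Set.indicator B (Gn x) (x + h) := by
  have hWmeas : Measurable (fun z : EuclideanSpace ℝ (Fin n) × EuclideanSpace ℝ (Fin n) =>
      Set.indicator B (Gn z.1) (z.1 + z.2)) := by
    classical
    simp only [Set.indicator_apply]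
    refine Measurable.ite ?_ ?_ measurable_const
    · exact (measurable_fst.add measurable_snd) hBmeas
    · exact hGnmeas.comp (measurable_fst.prodMk (measurable_fst.add measurable_snd))
  calc (∫⁻ x in B, ∫⁻ y in B, Gn x y)
      = ∫⁻ x in B, ∫⁻ y, Set.indicator B (Gn x) y := by
        refine lintegral_congr fun x => ?_
        rw [lintegral_indicator hBmeas]
    _ = ∫⁻ x in B, ∫⁻ h, Set.indicator B (Gn x) (x + h) := by
        refine lintegral_congr fun x => ?_
        exact (lintegral_add_left_eq_self (fun y => Set.indicator B (Gn x) y) x).symm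
    _ = ∫⁻ h, ∫⁻ x in B, Set.indicator B (Gn x) (x + h) :=
        lintegral_lintegral_swap hWmeas.aemeasurable

private lemma nik_pointwise (hp : 1 < p) (hδ0 : 0 < δ)
    (G Gn : EuclideanSpace ℝ (Fin n) → EuclideanSpace ℝ (Fin n) → ℝ≥0∞)
    (hGdef : G = fun x y => (‖f x - f y‖₊ : ℝ≥0∞) ^ p / edist x y ^ q)
    (hGndef : Gn = fun x y => if edist x y ≤ ENNReal.ofReal δ then G x y else 0)
    (key : ∀ h : EuclideanSpace ℝ (Fin n), ‖h‖ ≤ δ →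
      (∫⁻ x in B, (‖f (x + h) - f x‖₊ : ℝ≥0∞) ^ p) ≤ ENNReal.ofReal ((S * ‖h‖ ^ α) ^ p))
    (h : EuclideanSpace ℝ (Fin n)) :
    (∫⁻ x in B, Set.indicator B (Gn x) (x + h)) ≤
      Set.indicator (Metric.closedBall 0 δ)
        (fun h => ENNReal.ofReal ((S * ‖h‖ ^ α) ^ p) / (ENNReal.ofReal ‖h‖) ^ q) h := by
  have hp0 : (0:ℝ) < p := by linarith
  have hedist : ∀ x : EuclideanSpace ℝ (Fin n), edist x (x + h) = ENNReal.ofReal ‖h‖ := by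
    intro x
    rw [edist_dist, dist_eq_norm, show x - (x + h) = -h by abel, norm_neg]
  by_cases hhδ : ‖h‖ ≤ δ
  · have hmem : h ∈ Metric.closedBall (0 : EuclideanSpace ℝ (Fin n)) δ := by
      rwa [Metric.mem_closedBall, dist_zero_right]
    rw [Set.indicator_of_mem hmem]
    rcases eq_or_ne h 0 with rfl | hh0
    · have hzero : ∀ x, Set.indicator B (Gn x) (x + 0) = 0 := by
        intro x
        have hGn0 : Gn x (x + 0) = 0 := by
          rw [hGndef]
          simp only [add_zero]
          have hG0 : G x x = 0 := by
            rw [hGdef]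
            simp only [sub_self, nnnorm_zero, ENNReal.coe_zero,
              ENNReal.zero_rpow_of_pos hp0, ENNReal.zero_div]
          rw [hG0, ite_self]
        refine le_antisymm ?_ (zero_le)
        calc Set.indicator B (Gn x) (x + 0) ≤ Gn x (x + 0) := Set.indicator_le_self _ _ _
          _ = 0 := hGn0
      calc (∫⁻ x in B, Set.indicator B (Gn x) (x + 0)) = ∫⁻ _x in B, (0:ℝ≥0∞) :=
            lintegral_congr fun x => hzero x
        _ = 0 := lintegral_zero
        _ ≤ _ := zero_le
    · have hh0' : 0 < ‖h‖ := norm_pos_iff.mpr hh0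
      have hDne : ((ENNReal.ofReal ‖h‖) ^ q : ℝ≥0∞) ≠ 0 :=
        (ENNReal.rpow_pos (by simp [hh0', hh0]) ENNReal.ofReal_ne_top).ne'
      have hDinv : ((ENNReal.ofReal ‖h‖) ^ q : ℝ≥0∞)⁻¹ ≠ ⊤ := by simp [hDne, hh0]
      calc (∫⁻ x in B, Set.indicator B (Gn x) (x + h))
          ≤ ∫⁻ x in B, (‖f x - f (x+h)‖₊ : ℝ≥0∞) ^ p / (ENNReal.ofReal ‖h‖) ^ q := by
            refine lintegral_mono fun x => ?_
            refine (Set.indicator_le_self _ _ _).trans ?_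
            have h1 : Gn x (x+h) ≤ G x (x+h) := by
              rw [hGndef]; dsimp only; split_ifs
              · exact le_rfl
              · exact zero_le
            refine h1.trans (le_of_eq ?_)
            rw [hGdef]; dsimp only; rw [hedist x]
        _ = (∫⁻ x in B, (‖f (x+h) - f x‖₊ : ℝ≥0∞) ^ p) * ((ENNReal.ofReal ‖h‖) ^ q)⁻¹ := by
            simp_rw [div_eq_mul_inv]
            rw [lintegral_mul_const' _ _ hDinv]
            congr 1
            exact lintegral_congr fun x => by
              rw [show f x - f (x+h) = -(f (x+h) - f x) by abel, nnnorm_neg]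
        _ ≤ ENNReal.ofReal ((S * ‖h‖ ^ α) ^ p) * ((ENNReal.ofReal ‖h‖) ^ q)⁻¹ := by
            gcongr
            exact key h hhδ
        _ = ENNReal.ofReal ((S * ‖h‖ ^ α) ^ p) / (ENNReal.ofReal ‖h‖) ^ q := by
            rw [div_eq_mul_inv]
  · have hzero : ∀ x, Set.indicator B (Gn x) (x + h) = 0 := by
      intro x
      have hGn0 : Gn x (x + h) = 0 := by
        rw [hGndef]
        dsimp only
        rw [if_neg]
        rw [hedist x]
        intro hcon
        exact hhδ ((ENNReal.ofReal_le_ofReal_iff hδ0.le).mp hcon)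
      refine le_antisymm ?_ (zero_le)
      calc Set.indicator B (Gn x) (x + h) ≤ Gn x (x + h) := Set.indicator_le_self _ _ _
        _ = 0 := hGn0
    calc (∫⁻ x in B, Set.indicator B (Gn x) (x + h)) = ∫⁻ _x in B, (0:ℝ≥0∞) :=
          lintegral_congr fun x => hzero x
      _ = 0 := lintegral_zero
      _ ≤ _ := zero_le

private lemma nik_radial (hn : 1 ≤ n) (hp : 1 < p) (hδ0 : 0 < δ) (hα0 : 0 < α) (hα1 : α ≤ 1)
    (hβ0 : 0 < β) (hβα : β < α) (hS0 : 0 < S)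
    (hq : q = (n:ℝ) + β * p)
    (hV : V = (volume (Metric.ball (0 : EuclideanSpace ℝ (Fin n)) 1)).toReal + 1) :
    (∫⁻ h in Metric.closedBall (0 : EuclideanSpace ℝ (Fin n)) δ,
        ENNReal.ofReal ((S * ‖h‖ ^ α) ^ p) / (ENNReal.ofReal ‖h‖) ^ q)
      ≤ ENNReal.ofReal
        (V * 2 ^ ((n:ℝ) + p) * ((1 + p * Real.log 2) / Real.log 2) * S ^ p *
          δ ^ ((α-β)*p) / ((α-β)*p)) := by
  have hp0 : (0:ℝ) < p := by linarith
  haveI : NeZero n := ⟨by omega⟩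
  have hV1 : 1 ≤ V := hV ▸ le_add_of_nonneg_left ENNReal.toReal_nonneg
  have hV0 : 0 < V := lt_of_lt_of_le one_pos hV1
  set s : ℝ := (α - β) * p with hs
  have hs0 : 0 < s := by have : 0 < α - β := by linarith
                         positivity
  have hsp : s ≤ p := by nlinarith
  set Ψ : EuclideanSpace ℝ (Fin n) → ℝ≥0∞ :=
    fun h => ENNReal.ofReal ((S * ‖h‖ ^ α) ^ p) / (ENNReal.ofReal ‖h‖) ^ q with hΨ
  set Ann : ℕ → Set (EuclideanSpace ℝ (Fin n)) := fun j =>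
    Metric.closedBall 0 (δ * 2^(-(j:ℝ))) \ Metric.closedBall 0 (δ * 2^(-(j:ℝ)-1)) with hAnn
  have hcover : Metric.closedBall (0 : EuclideanSpace ℝ (Fin n)) δ ⊆
      {0} ∪ ⋃ j, Ann j := by
    intro h hh
    rw [Metric.mem_closedBall, dist_zero_right] at hh
    rcases eq_or_ne h 0 with rfl | hh0
    · exact Set.mem_union_left _ rfl
    · have hh0' : 0 < ‖h‖ := norm_pos_iff.mpr hh0
      right
      set t : ℝ := δ / ‖h‖ with htdef
      have ht1 : 1 ≤ t := (one_le_div hh0').mpr hh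
      have ht0 : 0 < t := lt_of_lt_of_le one_pos ht1
      have hlogb0 : 0 ≤ Real.logb 2 t := Real.logb_nonneg one_lt_two ht1
      obtain ⟨j, hjle, hjlt⟩ : ∃ j : ℕ, (j:ℝ) ≤ Real.logb 2 t ∧ Real.logb 2 t < (j:ℝ) + 1 :=
        ⟨⌊Real.logb 2 t⌋₊, Nat.floor_le hlogb0, Nat.lt_floor_add_one _⟩
      have h2j : (0:ℝ) < 2 ^ (j:ℝ) := Real.rpow_pos_of_pos two_pos _
      have h2j1 : (0:ℝ) < 2 ^ ((j:ℝ)+1) := Real.rpow_pos_of_pos two_pos _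
      have hup : (2:ℝ) ^ (j:ℝ) ≤ t := by
        calc (2:ℝ) ^ (j:ℝ) ≤ 2 ^ Real.logb 2 t :=
              Real.rpow_le_rpow_of_exponent_le one_le_two hjle
          _ = t := Real.rpow_logb two_pos (by norm_num) ht0
      have hlow : t < (2:ℝ) ^ ((j:ℝ)+1) := by
        calc t = 2 ^ Real.logb 2 t := (Real.rpow_logb two_pos (by norm_num) ht0).symm
          _ < 2 ^ ((j:ℝ)+1) := Real.rpow_lt_rpow_of_exponent_lt one_lt_two hjlt
      have e1 : δ * 2 ^ (-(j:ℝ)) = δ / 2 ^ ((j:ℝ)) := by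
        rw [Real.rpow_neg (by norm_num : (0:ℝ) ≤ 2), div_eq_mul_inv]
      have e2 : δ * 2 ^ (-(j:ℝ)-1) = δ / 2 ^ ((j:ℝ)+1) := by
        rw [show -(j:ℝ)-1 = -((j:ℝ)+1) by ring,
          Real.rpow_neg (by norm_num : (0:ℝ) ≤ 2), div_eq_mul_inv]
      refine Set.mem_iUnion.mpr ⟨j, ?_, ?_⟩
      · rw [Metric.mem_closedBall, dist_zero_right, e1, le_div_iff₀ h2j]
        have h3 := (le_div_iff₀ hh0').mp hup
        calc ‖h‖ * 2 ^ (j:ℝ) = 2 ^ (j:ℝ) * ‖h‖ := mul_comm _ _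
          _ ≤ δ := h3
      · simp only [Metric.mem_closedBall, dist_zero_right, not_le]
        rw [e2, div_lt_iff₀ h2j1]
        have h4 : δ / ‖h‖ < 2 ^ ((j:ℝ)+1) := hlow
        rw [div_lt_iff₀ hh0'] at h4
        linarith
  have hAnnMeas : ∀ j, MeasurableSet (Ann j) := fun j =>
    measurableSet_closedBall.diff measurableSet_closedBall
  have hsplit : (∫⁻ h in Metric.closedBall (0 : EuclideanSpace ℝ (Fin n)) δ, Ψ h) ≤
      ∑' j, ∫⁻ h in Ann j, Ψ h := by
    calc (∫⁻ h in Metric.closedBall (0 : EuclideanSpace ℝ (Fin n)) δ, Ψ h)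
        ≤ ∫⁻ h in ({0} ∪ ⋃ j, Ann j : Set (EuclideanSpace ℝ (Fin n))), Ψ h :=
          lintegral_mono_set hcover
      _ ≤ (∫⁻ h in ({0} : Set (EuclideanSpace ℝ (Fin n))), Ψ h) +
            ∫⁻ h in (⋃ j, Ann j), Ψ h := by
          refine le_trans (lintegral_mono' (Measure.restrict_union_le _ _) le_rfl) ?_
          exact le_of_eq (lintegral_add_measure _ _ _)
      _ = ∫⁻ h in (⋃ j, Ann j), Ψ h := by
          rw [setLIntegral_measure_zero _ _ (measure_singleton 0), zero_add]
      _ ≤ ∑' j, ∫⁻ h in Ann j, Ψ h := lintegral_iUnion_le _ _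
  have hannulus : ∀ j : ℕ, (∫⁻ h in Ann j, Ψ h) ≤
      ENNReal.ofReal (V * 2^((n:ℝ)+p) * S^p * δ^s) * (ENNReal.ofReal ((2:ℝ)^(-s)))^j := by
    intro j
    set b : ℝ := δ * 2^(-(j:ℝ)) with hb
    set a : ℝ := δ * 2^(-(j:ℝ)-1) with ha
    have hb0 : 0 < b := by positivity
    have ha0 : 0 < a := by positivity
    set Cj : ℝ≥0∞ := ENNReal.ofReal ((S * b^α)^p) / ENNReal.ofReal (a^q) with hCj
    have hΨle : ∀ h ∈ Ann j, Ψ h ≤ Cj := by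
      intro h hh
      rw [hAnn] at hh
      obtain ⟨hh1, hh2⟩ := hh
      rw [Metric.mem_closedBall, dist_zero_right] at hh1
      rw [Metric.mem_closedBall, dist_zero_right, not_le] at hh2
      rw [hΨ, hCj]
      dsimp only
      refine ENNReal.div_le_div ?_ ?_
      · apply ENNReal.ofReal_le_ofReal
        apply Real.rpow_le_rpow (by positivity) _ hp0.le
        have h5 : ‖h‖ ^ α ≤ b ^ α :=
          Real.rpow_le_rpow (norm_nonneg h) hh1 hα0.le
        nlinarith
      · rw [ENNReal.ofReal_rpow_of_nonneg (norm_nonneg h) (by rw [hq]; positivity)]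
        apply ENNReal.ofReal_le_ofReal
        exact Real.rpow_le_rpow ha0.le hh2.le (by rw [hq]; positivity)
    have hμAnn : volume (Ann j) ≤ ENNReal.ofReal (b^(n:ℝ)) * ENNReal.ofReal V := by
      calc volume (Ann j) ≤ volume (Metric.closedBall (0:EuclideanSpace ℝ (Fin n)) b) :=
            measure_mono (by rw [hAnn]; exact Set.diff_subset)
        _ = ENNReal.ofReal (b ^ Module.finrank ℝ (EuclideanSpace ℝ (Fin n))) *
              volume (Metric.ball (0:EuclideanSpace ℝ (Fin n)) 1) :=
            Measure.addHaar_closedBall _ _ hb0.le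
        _ ≤ ENNReal.ofReal (b^(n:ℝ)) * ENNReal.ofReal V := by
            gcongr
            · rw [finrank_euclideanSpace_fin, ← Real.rpow_natCast b n]
            · have hlt : volume (Metric.ball (0 : EuclideanSpace ℝ (Fin n)) 1) < ⊤ :=
                measure_ball_lt_top
              rw [← ENNReal.ofReal_toReal hlt.ne]
              exact ENNReal.ofReal_le_ofReal (by rw [hV]; linarith)
    calc (∫⁻ h in Ann j, Ψ h) ≤ ∫⁻ _h in Ann j, Cj :=
          setLIntegral_mono measurable_const hΨle
      _ = Cj * volume (Ann j) := setLIntegral_const _ _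
      _ ≤ Cj * (ENNReal.ofReal (b^(n:ℝ)) * ENNReal.ofReal V) := by gcongr
      _ = ENNReal.ofReal ((S * b^α)^p / a^q * (b^(n:ℝ) * V)) := by
          rw [hCj, ← ENNReal.ofReal_div_of_pos (by positivity),
            ← ENNReal.ofReal_mul (by positivity), ← ENNReal.ofReal_mul (by positivity)]
      _ ≤ ENNReal.ofReal ((V * 2^((n:ℝ)+p) * S^p * δ^((α-β)*p)) * ((2:ℝ)^(-((α-β)*p)))^j) := by
          apply ENNReal.ofReal_le_ofReal
          rw [hb, ha, hq]
          exact nik_annulus n p α β δ S V hp hα0 hα1 hβ0 hβα hδ0 hS0 hV0 j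
      _ = ENNReal.ofReal (V * 2^((n:ℝ)+p) * S^p * δ^s) * (ENNReal.ofReal ((2:ℝ)^(-s)))^j := by
          rw [← hs, ENNReal.ofReal_mul (by positivity), ENNReal.ofReal_pow (by positivity)]
  calc (∫⁻ h in Metric.closedBall (0 : EuclideanSpace ℝ (Fin n)) δ, Ψ h)
      ≤ ∑' j, ∫⁻ h in Ann j, Ψ h := hsplit
    _ ≤ ∑' j : ℕ, ENNReal.ofReal (V * 2^((n:ℝ)+p) * S^p * δ^s) *
          (ENNReal.ofReal ((2:ℝ)^(-s)))^j := ENNReal.tsum_le_tsum hannulus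
    _ = ENNReal.ofReal (V * 2^((n:ℝ)+p) * S^p * δ^s) *
          (1 - ENNReal.ofReal ((2:ℝ)^(-s)))⁻¹ := by
        rw [ENNReal.tsum_mul_left, ENNReal.tsum_geometric]
    _ ≤ ENNReal.ofReal (V * 2^((n:ℝ)+p) * S^p * δ^s) *
          ENNReal.ofReal ((1 + p * Real.log 2) / (Real.log 2 * s)) := by
        gcongr
        exact nik_geom p s hp0 hs0 hsp
    _ = ENNReal.ofReal
        (V * 2 ^ ((n:ℝ) + p) * ((1 + p * Real.log 2) / Real.log 2) * S ^ p *
          δ ^ ((α-β)*p) / ((α-β)*p)) := by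
        rw [← ENNReal.ofReal_mul (by positivity)]
        congr 1
        rw [← hs]
        have hlog2 : (0:ℝ) < Real.log 2 := Real.log_pos one_lt_two
        field_simp

private lemma nik_near_rpow (hp : 1 < p) (hδ0 : 0 < δ) (hα0 : 0 < α) (hα1 : α ≤ 1)
    (hβ0 : 0 < β) (hβα : β < α) (hS0 : 0 < S) (hV0 : 0 < V) (N : ℝ≥0∞)
    (hNear : N ≤ ENNReal.ofReal
      (V * 2 ^ ((n:ℝ) + p) * ((1 + p * Real.log 2) / Real.log 2) * S ^ p *
        δ ^ ((α-β)*p) / ((α-β)*p))) :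
    N ^ (1/p) ≤ ENNReal.ofReal
      ((V * 2 ^ ((n:ℝ) + p) * ((1 + p * Real.log 2) / Real.log 2)) ^ (1/p) /
        (α - β) ^ (1/p) * δ ^ (α - β) * S) := by
  have hp0 : (0:ℝ) < p := by linarith
  have hlog2 : (0:ℝ) < Real.log 2 := Real.log_pos one_lt_two
  have h2np : (0:ℝ) < 2 ^ ((n:ℝ)+p) := Real.rpow_pos_of_pos two_pos _
  set X : ℝ := V * 2 ^ ((n:ℝ) + p) * ((1 + p * Real.log 2) / Real.log 2) with hX
  have hX0 : 0 < X := by positivity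
  have hαβ : (0:ℝ) < α - β := by linarith
  calc N ^ (1/p) ≤ (ENNReal.ofReal (X * S ^ p * δ ^ ((α-β)*p) / ((α-β)*p))) ^ (1/p) :=
        ENNReal.rpow_le_rpow hNear (by positivity)
    _ = ENNReal.ofReal ((X * S ^ p * δ ^ ((α-β)*p) / ((α-β)*p)) ^ (1/p)) :=
        ENNReal.ofReal_rpow_of_nonneg (by positivity) (by positivity)
    _ ≤ ENNReal.ofReal (X ^ (1/p) / (α - β) ^ (1/p) * δ ^ (α - β) * S) := by
        apply ENNReal.ofReal_le_ofReal
        have e1 : (X * S ^ p * δ ^ ((α-β)*p) / ((α-β)*p)) ^ (1/p) =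
            X ^ (1/p) * S * δ ^ (α-β) / ((α-β) ^ (1/p) * p ^ (1/p)) := by
          rw [Real.div_rpow (by positivity) (by positivity),
            Real.mul_rpow (by positivity) (by positivity),
            Real.mul_rpow (by positivity) (by positivity),
            Real.mul_rpow (by positivity) (by positivity),
            ← Real.rpow_mul hS0.le, ← Real.rpow_mul hδ0.le]
          rw [show p * (1/p) = 1 by field_simp, show (α-β)*p * (1/p) = α - β by field_simp,
            Real.rpow_one, Real.mul_rpow hαβ.le hp0.le]
        rw [e1]
        have hpr : (1:ℝ) ≤ p ^ (1/p) := Real.one_le_rpow hp.le (by positivity)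
        calc X ^ (1/p) * S * δ ^ (α-β) / ((α-β) ^ (1/p) * p ^ (1/p))
            ≤ X ^ (1/p) * S * δ ^ (α-β) / ((α-β) ^ (1/p) * 1) := by
              apply div_le_div_of_nonneg_left (by positivity) (by positivity)
              have h1 : (0:ℝ) < (α-β) ^ (1/p) := by positivity
              nlinarith
          _ = X ^ (1/p) / (α-β) ^ (1/p) * δ ^ (α-β) * S := by
              rw [mul_one]; ring

private lemma nik_assemble {C₁ C₃ e : ℝ}
    (hp : 1 < p) (hδ0 : 0 < δ) (hδ1 : δ ≤ 1) (hαβ : 0 < α - β) (hS0 : 0 < S)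
    (hC₁ : 0 < C₁) (hC₃ : 0 < C₃) (he0 : 0 ≤ e)
    (L Lr I N Fa : ℝ≥0∞)
    (hsplit : I ≤ N + Fa)
    (hNear' : N ^ (1/p) ≤ ENNReal.ofReal (C₁ / (α - β) ^ (1/p) * δ ^ (α - β) * S))
    (hFar' : Fa ^ (1/p) ≤ ENNReal.ofReal (C₃ * δ ^ (-e)) * Lr)
    (hmono : L ≤ Lr) :
    L + I ^ (1/p) ≤
      ENNReal.ofReal ((C₁ + 1 + C₃) / (α - β) ^ (1/p) * δ ^ (α - β) * S) +
        ENNReal.ofReal ((C₁ + 1 + C₃) * δ ^ (-e)) * Lr := by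
  have hp0 : (0:ℝ) < p := by linarith
  have hw1 : (1:ℝ) ≤ δ ^ (-e) := by
    rw [Real.rpow_neg hδ0.le]
    rw [one_le_inv_iff₀]
    exact ⟨Real.rpow_pos_of_pos hδ0 e, Real.rpow_le_one hδ0.le hδ1 he0⟩
  calc L + I ^ (1/p) ≤ L + (N + Fa) ^ (1/p) := by
        gcongr
    _ ≤ L + (N ^ (1/p) + Fa ^ (1/p)) := by
        gcongr
        exact ENNReal.rpow_add_le_add_rpow N Fa (by positivity)
          (by rw [div_le_one hp0]; linarith)
    _ = N ^ (1/p) + (L + Fa ^ (1/p)) := by ring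
    _ ≤ ENNReal.ofReal (C₁ / (α - β) ^ (1/p) * δ ^ (α - β) * S) +
          (Lr + ENNReal.ofReal (C₃ * δ ^ (-e)) * Lr) := by
        gcongr
    _ = ENNReal.ofReal (C₁ / (α - β) ^ (1/p) * δ ^ (α - β) * S) +
          (1 + ENNReal.ofReal (C₃ * δ ^ (-e))) * Lr := by ring
    _ ≤ ENNReal.ofReal ((C₁ + 1 + C₃) / (α - β) ^ (1/p) * δ ^ (α - β) * S) +
          ENNReal.ofReal ((C₁ + 1 + C₃) * δ ^ (-e)) * Lr := by
        gcongr
        · linarith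
        · calc 1 + ENNReal.ofReal (C₃ * δ ^ (-e))
              = ENNReal.ofReal (1 + C₃ * δ ^ (-e)) := by
                rw [ENNReal.ofReal_add (by norm_num) (by positivity), ENNReal.ofReal_one]
            _ ≤ ENNReal.ofReal ((C₁ + 1 + C₃) * δ ^ (-e)) := by
                apply ENNReal.ofReal_le_ofReal
                nlinarith

end NikAux

theorem stmt_2 (n : ℕ) (p : ℝ) (hn : 1 ≤ n) (hp : 1 < p) :
    ∃ c : ℝ, 0 < c ∧
      ∀ (k : ℕ) (_ : 1 ≤ k) (x₀ : EuclideanSpace ℝ (Fin n)) (r ϱ : ℝ)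
        (f : EuclideanSpace ℝ (Fin n) → EuclideanSpace ℝ (Fin k)) (α S K β : ℝ),
        0 < ϱ → ϱ < r → r ≤ 1 →
        Measurable f →
        lpNormOn (Metric.ball x₀ r) f p < ⊤ →
        α ∈ Set.Ioc (0 : ℝ) 1 → 1 ≤ S → 1 ≤ K →
        (∀ h : EuclideanSpace ℝ (Fin n), 0 < ‖h‖ → ‖h‖ ≤ (r - ϱ) / K →
          (∫⁻ x in Metric.ball x₀ ϱ, (‖f (x + h) - f x‖₊ : ℝ≥0∞) ^ p) ^ (1 / p) ≤
            ENNReal.ofReal (S * ‖h‖ ^ α)) →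
        β ∈ Set.Ioo 0 α →
        lpNormOn (Metric.ball x₀ ϱ) f p + gagliardoSeminorm (Metric.ball x₀ ϱ) f β p ≤
          ENNReal.ofReal (c / (α - β) ^ (1 / p) * ((r - ϱ) / K) ^ (α - β) * S) +
            ENNReal.ofReal (c * (K / (r - ϱ)) ^ ((n : ℝ) / p + β)) *
              lpNormOn (Metric.ball x₀ r) f p := by
  classical
  have hp0 : (0:ℝ) < p := lt_trans one_pos hp
  have hlog2 : (0:ℝ) < Real.log 2 := Real.log_pos one_lt_two
  set V : ℝ := (volume (Metric.ball (0 : EuclideanSpace ℝ (Fin n)) 1)).toReal + 1 with hVdef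
  have hV1 : 1 ≤ V := le_add_of_nonneg_left ENNReal.toReal_nonneg
  have hV0 : 0 < V := lt_of_lt_of_le one_pos hV1
  set C₁ : ℝ := (V * 2 ^ ((n:ℝ) + p) * ((1 + p * Real.log 2) / Real.log 2)) ^ (1/p) with hC₁def
  set C₃ : ℝ := (2 ^ (p+1) * V) ^ (1/p) with hC₃def
  have hC₁0 : 0 < C₁ := by
    apply Real.rpow_pos_of_pos
    have h2 : (0:ℝ) < 2 ^ ((n:ℝ) + p) := Real.rpow_pos_of_pos two_pos _
    positivity
  have hC₃0 : 0 < C₃ := by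
    apply Real.rpow_pos_of_pos
    have h2 : (0:ℝ) < 2 ^ (p+1) := Real.rpow_pos_of_pos two_pos _
    positivity
  refine ⟨C₁ + 1 + C₃, by positivity, ?_⟩
  intro k hk x₀ r ϱ f α S K β hϱ0 hϱr hr1 hf hlpfin hα hS1 hK1 hyp hβ
  obtain ⟨hα0, hα1⟩ := hα
  obtain ⟨hβ0, hβα⟩ := hβ
  have hS0 : (0:ℝ) < S := lt_of_lt_of_le one_pos hS1
  set δ : ℝ := (r - ϱ) / K with hδdef
  have hδ0 : 0 < δ := div_pos (by linarith) (by linarith)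
  have hδ1 : δ ≤ 1 := by
    rw [hδdef, div_le_one (by linarith)]; nlinarith
  set B : Set (EuclideanSpace ℝ (Fin n)) := Metric.ball x₀ ϱ with hBdef
  set B' : Set (EuclideanSpace ℝ (Fin n)) := Metric.ball x₀ r with hB'def
  have hBmeas : MeasurableSet B := Metric.isOpen_ball.measurableSet
  have hBB' : B ⊆ B' := Metric.ball_subset_ball (le_of_lt hϱr)
  set q : ℝ := (n:ℝ) + β * p with hqdef
  have hq0 : 0 < q := by positivity
  -- Lp norm monotonicity
  have hmono_lp : lpNormOn B f p ≤ lpNormOn B' f p := by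
    unfold lpNormOn
    refine ENNReal.rpow_le_rpow ?_ (by positivity)
    exact lintegral_mono_set hBB'
  -- measure of B
  have hμB : volume B ≤ ENNReal.ofReal V := by
    rw [hVdef]; exact nik_ball_measure x₀ ϱ r hϱr hr1
  -- the hypothesis in integral form
  have key := nik_key (f := f) (B := B) hp hα0 hS0 hyp
  -- integrands
  set G : EuclideanSpace ℝ (Fin n) → EuclideanSpace ℝ (Fin n) → ℝ≥0∞ :=
    fun x y => (‖f x - f y‖₊ : ℝ≥0∞) ^ p / edist x y ^ q with hGdef
  set Gn : EuclideanSpace ℝ (Fin n) → EuclideanSpace ℝ (Fin n) → ℝ≥0∞ :=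
    fun x y => if edist x y ≤ ENNReal.ofReal δ then G x y else 0 with hGndef
  set Gf : EuclideanSpace ℝ (Fin n) → EuclideanSpace ℝ (Fin n) → ℝ≥0∞ :=
    fun x y => (‖f x - f y‖₊ : ℝ≥0∞) ^ p / (ENNReal.ofReal δ) ^ q with hGfdef
  have hGmeas : Measurable (fun z : EuclideanSpace ℝ (Fin n) × EuclideanSpace ℝ (Fin n) =>
      G z.1 z.2) := by
    rw [hGdef]; exact nik_meas_G hf
  have hGnmeas : Measurable (fun z : EuclideanSpace ℝ (Fin n) × EuclideanSpace ℝ (Fin n) =>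
      Gn z.1 z.2) := by
    rw [hGndef]
    exact Measurable.ite (measurableSet_le measurable_edist measurable_const) hGmeas
      measurable_const
  set I : ℝ≥0∞ := ∫⁻ x in B, ∫⁻ y in B, G x y with hIdef
  set N : ℝ≥0∞ := ∫⁻ x in B, ∫⁻ y in B, Gn x y with hNdef
  set Fa : ℝ≥0∞ := ∫⁻ x in B, ∫⁻ y in B, Gf x y with hFadef
  -- the Gagliardo seminorm is I^(1/p)
  have hGag : gagliardoSeminorm B f β p = I ^ (1/p) := by
    rw [hIdef]
    simp only [gagliardoSeminorm, hGdef, hqdef]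
  -- splitting
  have hsplitI : I ≤ N + Fa := by
    rw [hIdef, hNdef, hFadef]
    exact nik_split hq0 hδ0 G Gn Gf hGdef hGndef hGfdef hGnmeas
  -- far part
  have hFar : Fa ≤ ENNReal.ofReal (2 ^ (p+1) * V * δ ^ (-q)) *
      ∫⁻ x in B', (‖f x‖₊ : ℝ≥0∞) ^ p := by
    rw [hFadef]
    exact nik_far hp hq0 hδ0 hf hBB' hBmeas hV0 hμB Gf hGfdef
  have hFar' : Fa ^ (1/p) ≤ ENNReal.ofReal (C₃ * δ ^ (-((n:ℝ)/p + β))) * lpNormOn B' f p := by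
    rw [hC₃def]
    have hlpr : lpNormOn B' f p = (∫⁻ x in B', (‖f x‖₊ : ℝ≥0∞) ^ p) ^ (1/p) := rfl
    rw [hlpr]
    exact nik_far_rpow hp hqdef hδ0 Fa _ hV0 hFar
  -- near part
  have hNswap : N = ∫⁻ h, ∫⁻ x in B, Set.indicator B (Gn x) (x + h) := by
    rw [hNdef]
    exact nik_swap hBmeas Gn hGnmeas
  have hNear : N ≤ ENNReal.ofReal
      (V * 2 ^ ((n:ℝ) + p) * ((1 + p * Real.log 2) / Real.log 2) * S ^ p *
        δ ^ ((α-β)*p) / ((α-β)*p)) := by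
    rw [hNswap]
    calc (∫⁻ h, ∫⁻ x in B, Set.indicator B (Gn x) (x + h))
        ≤ ∫⁻ h, Set.indicator (Metric.closedBall 0 δ)
            (fun h => ENNReal.ofReal ((S * ‖h‖ ^ α) ^ p) / (ENNReal.ofReal ‖h‖) ^ q) h :=
          lintegral_mono fun h => nik_pointwise hp hδ0 G Gn hGdef hGndef key h
      _ = ∫⁻ h in Metric.closedBall (0 : EuclideanSpace ℝ (Fin n)) δ,
            ENNReal.ofReal ((S * ‖h‖ ^ α) ^ p) / (ENNReal.ofReal ‖h‖) ^ q := by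
          rw [lintegral_indicator measurableSet_closedBall]
      _ ≤ _ := nik_radial hn hp hδ0 hα0 hα1 hβ0 hβα hS0 hqdef hVdef
  have hNear' : N ^ (1/p) ≤
      ENNReal.ofReal (C₁ / (α - β) ^ (1/p) * δ ^ (α - β) * S) := by
    rw [hC₁def]
    exact nik_near_rpow hp hδ0 hα0 hα1 hβ0 hβα hS0 hV0 N hNear
  -- rewrite the right-hand side exponent
  have hKre : (K / (r - ϱ)) ^ ((n:ℝ)/p + β) = δ ^ (-((n:ℝ)/p + β)) := by
    have hKr : K / (r - ϱ) = δ⁻¹ := by rw [hδdef, inv_div]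
    rw [hKr, Real.rpow_neg hδ0.le, ← Real.inv_rpow hδ0.le]
  rw [hGag, hKre]
  exact nik_assemble hp hδ0 hδ1 (by linarith) hS0 hC₁0 hC₃0 (by positivity)
    (lpNormOn B f p) (lpNormOn B' f p) I N Fa hsplitI hNear' hFar' hmono_lp
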